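/- arXiv:0802.2189 — 2 statements merged into one kernel-verified Lean document; each statement's English description precedes it below -/
import Mathlib

section
/- Let C be a Krull-Schmidt category. The transfinite radical rad_C* is the unique maximal idempotent ideal of C which contains no identity morphism of a nonzero object: rad_C* is idempotent, contains no identities of nonzero objects, and every idempotent ideal I containing no identities of nonzero objects satisfies I ⊆ rad_C*. -/
open CategoryTheory CategoryTheory.Limits

universe w v u

structure CatIdeal (C : Type u) [Category.{v} C] [Preadditive C] where
  mem : ∀ {X Y : C}, (X ⟶ Y) → Prop
  zero_mem : ∀ {X Y : C}, mem (0 : X ⟶ Y)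
  add_mem : ∀ {X Y : C} {f g : X ⟶ Y}, mem f → mem g → mem (f + g)
  comp_mem_left : ∀ {X Y Z : C} {f : X ⟶ Y} (g : Y ⟶ Z), mem f → mem (f ≫ g)
  comp_mem_right : ∀ {X Y Z : C} (f : X ⟶ Y) {g : Y ⟶ Z}, mem g → mem (f ≫ g)

namespace CatIdeal

variable {C : Type u} [Category.{v} C] [Preadditive C]

instance : LE (CatIdeal C) :=
  ⟨fun I J => ∀ {X Y : C} {f : X ⟶ Y}, I.mem f → J.mem f⟩

/-- The ideal of all morphisms. -/
def top (C : Type u) [Category.{v} C] [Preadditive C] : CatIdeal C where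
  mem _ := True
  zero_mem := trivial
  add_mem := by intros; trivial
  comp_mem_left := by intros; trivial
  comp_mem_right := by intros; trivial

/-- The ideal generated by a class of morphisms. -/
def span (S : ∀ {X Y : C}, (X ⟶ Y) → Prop) : CatIdeal C where
  mem f := ∀ J : CatIdeal C, (∀ {A B : C} {g : A ⟶ B}, S g → J.mem g) → J.mem f
  zero_mem := fun J _ => J.zero_mem
  add_mem := by intro X Y f g hf hg J hS; exact J.add_mem (hf J hS) (hg J hS)
  comp_mem_left := by intro X Y Z f g hf J hS; exact J.comp_mem_left g (hf J hS)
  comp_mem_right := by intro X Y Z f g hg J hS; exact J.comp_mem_right f (hg J hS)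

/-- The product of two ideals: the ideal generated by all composites `g ≫ h`
with `g ∈ I` and `h ∈ J`. -/
def mul (I J : CatIdeal C) : CatIdeal C :=
  span (fun {X Z} f => ∃ (Y : C) (g : X ⟶ Y) (h : Y ⟶ Z), I.mem g ∧ J.mem h ∧ f = g ≫ h)

/-- An ideal is idempotent if it equals its square. -/
def IsIdempotent (I : CatIdeal C) : Prop := I = I.mul I

/-- The intersection of a family of ideals. -/
def iInter {ι : Sort*} (F : ι → CatIdeal C) : CatIdeal C where
  mem f := ∀ i, (F i).mem f
  zero_mem := fun i => (F i).zero_mem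
  add_mem := by intro X Y f g hf hg i; exact (F i).add_mem (hf i) (hg i)
  comp_mem_left := by intro X Y Z f g hf i; exact (F i).comp_mem_left g (hf i)
  comp_mem_right := by intro X Y Z f g hg i; exact (F i).comp_mem_right f (hg i)

/-- Finite powers of an ideal: `npow I n` is the ideal generated by `n`-fold
composites of morphisms from `I` (with `npow I 0` the ideal of all morphisms). -/
def npow (I : CatIdeal C) : ℕ → CatIdeal C
  | 0 => top C
  | n + 1 => (npow I n).mul I

/-- The largest limit-or-zero ordinal `≤ α`, namely `ω * (α / ω)`. -/
noncomputable def limitPart (α : Ordinal.{w}) : Ordinal.{w} :=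
  Ordinal.omega0 * (α / Ordinal.omega0)

theorem limitPart_lt {α : Ordinal.{w}} (h0 : α ≠ 0) (hl : ¬ Order.IsSuccLimit α) :
    limitPart α < α := by
  have hle : limitPart α ≤ α := Ordinal.mul_div_le α Ordinal.omega0
  rcases lt_or_eq_of_le hle with h | h
  · exact h
  · exfalso
    rcases eq_or_ne (α / Ordinal.omega0) 0 with hq | hq
    · exact h0 (by rw [← h]; simp [limitPart, hq])
    · exact hl (by rw [← h]; exact Ordinal.isSuccLimit_mul_left Ordinal.isSuccLimit_omega0 (pos_iff_ne_zero.2 hq))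

end CatIdeal

open Ordinal Classical in
/-- Transfinite powers of an ideal `I`: `tpow I 0` is the ideal of all morphisms,
`tpow I n` (for finite `n ≥ 1`) is the ideal generated by `n`-fold composites of
morphisms from `I`, `tpow I α = ⋂_{β < α} tpow I β` at limit ordinals `α`, and
`tpow I (β + n) = (tpow I β) ^ (n + 1)` for `β` limit and `1 ≤ n < ω`. -/
noncomputable def CatIdeal.tpow {C : Type u} [Category.{v} C] [Preadditive C]
    (I : CatIdeal C) : Ordinal.{w} → CatIdeal C
  | α =>
    if h0 : α = 0 then CatIdeal.top C
    else if hl : Order.IsSuccLimit α then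
      CatIdeal.iInter (fun β : {β : Ordinal.{w} // β < α} =>
        have := β.2
        CatIdeal.tpow I β.1)
    else
      (have : Ordinal.pred α < α :=
        Ordinal.pred_lt_iff_not_isSuccPrelimit.2 (fun hp => hl (Ordinal.isSuccLimit_iff.2 ⟨h0, hp⟩))
       CatIdeal.tpow I (Ordinal.pred α)).mul
        (if Ordinal.omega0 ≤ α then
          have := CatIdeal.limitPart_lt h0 hl
          CatIdeal.tpow I (CatIdeal.limitPart α)
         else I)
  termination_by α => α

namespace CatIdeal

/-- The intersection `I* = ⋂_α I^α` of all transfinite powers of `I`. -/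
noncomputable def tstar {C : Type u} [Category.{v} C] [Preadditive C] (I : CatIdeal C) : CatIdeal C :=
  iInter (fun α : Ordinal.{v} => tpow I α)

end CatIdeal

section KS

open CategoryTheory CategoryTheory.Limits

variable (C : Type u) [Category.{v} C] [Preadditive C]

/-- `X` is a biproduct (finite direct sum) of the finite family `Y`,
witnessed by projections and inclusions. -/
def IsBiproductOf (X : C) {n : ℕ} (Y : Fin n → C) : Prop :=
  ∃ (p : ∀ i, X ⟶ Y i) (s : ∀ i, Y i ⟶ X),
    (∀ i, s i ≫ p i = 𝟙 (Y i)) ∧ (∀ i j, i ≠ j → s i ≫ p j = 0) ∧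
    (∑ i, p i ≫ s i) = 𝟙 X

/-- An object is indecomposable if it is nonzero and has no idempotent endomorphisms
other than `0` and the identity (i.e. it admits no nontrivial direct sum decomposition). -/
def IsIndecomposableObj (X : C) : Prop :=
  ¬ IsZero X ∧ ∀ e : X ⟶ X, e ≫ e = e → e = 0 ∨ e = 𝟙 X

/-- The radical of a Krull-Schmidt category: the ideal generated by all non-invertible
morphisms between indecomposable objects. -/
def catRadical : CatIdeal C :=
  CatIdeal.span (fun {X Y} f => IsIndecomposableObj C X ∧ IsIndecomposableObj C Y ∧ ¬ IsIso f)

/-- The transfinite radical `rad_C* = ⋂_α rad_C^α`. -/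
noncomputable def catTransRadical : CatIdeal C := CatIdeal.tstar (catRadical C)

/-- A Krull-Schmidt category: every object decomposes as a finite direct sum of objects
with local endomorphism rings. -/
def IsKrullSchmidt : Prop :=
  ∀ X : C, ∃ (n : ℕ) (Y : Fin n → C),
    (∀ i, IsLocalRing (End (Y i))) ∧ IsBiproductOf C X Y

/-- Local descending chain condition on ideals: every descending chain of ideals,
evaluated at any fixed pair of objects, stabilizes. -/
def HasLocalDCC : Prop :=
  ∀ (I : ℕ → CatIdeal C), (∀ n, I (n + 1) ≤ I n) →
    ∀ X Y : C, ∃ n, ∀ m, n ≤ m → ∀ f : X ⟶ Y, (I m).mem f ↔ (I n).mem f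

/-- The ideal generated by the identity morphisms of the objects in `S`. -/
def identityIdeal (S : Set C) : CatIdeal C :=
  CatIdeal.span (fun {X Y} f => ∃ h : X = Y, X ∈ S ∧ f = CategoryTheory.eqToHom h)

/-- An ideal is zero if it consists exactly of the zero morphisms. -/
def CatIdeal.IsZeroIdeal {C : Type u} [Category.{v} C] [Preadditive C] (I : CatIdeal C) : Prop :=
  ∀ {X Y : C} {f : X ⟶ Y}, I.mem f → f = 0

end KS

section Aux

open CategoryTheory CategoryTheory.Limits

namespace CatIdeal

variable {C : Type u} [Category.{v} C] [Preadditive C]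

theorem ext' {I J : CatIdeal C} (h : ∀ (X Y : C) (f : X ⟶ Y), I.mem f ↔ J.mem f) : I = J := by
  obtain ⟨mI, _, _, _, _⟩ := I
  obtain ⟨mJ, _, _, _, _⟩ := J
  have h2 : @mI = @mJ := by
    funext X Y f
    exact propext (h X Y f)
  subst h2
  rfl

theorem le_antisymm' {I J : CatIdeal C} (h1 : I ≤ J) (h2 : J ≤ I) : I = J :=
  ext' fun _ _ _ => ⟨fun h => h1 h, fun h => h2 h⟩

theorem le_refl' (I : CatIdeal C) : I ≤ I := fun h => h

theorem le_trans' {I J K : CatIdeal C} (h1 : I ≤ J) (h2 : J ≤ K) : I ≤ K :=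
  fun h => h2 (h1 h)

theorem mem_span_of {S : ∀ {X Y : C}, (X ⟶ Y) → Prop} {X Y : C} {f : X ⟶ Y} (hf : S f) :
    (span S).mem f := fun _ hS => hS hf

theorem span_le {S : ∀ {X Y : C}, (X ⟶ Y) → Prop} {J : CatIdeal C}
    (h : ∀ {A B : C} {g : A ⟶ B}, S g → J.mem g) : span S ≤ J :=
  fun hf => hf J h

theorem mem_mul_of {I J : CatIdeal C} {X Y Z : C} {g : X ⟶ Y} {h : Y ⟶ Z}
    (hg : I.mem g) (hh : J.mem h) : (I.mul J).mem (g ≫ h) :=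
  mem_span_of ⟨Y, g, h, hg, hh, rfl⟩

theorem mul_le_left {I J : CatIdeal C} : I.mul J ≤ I := by
  apply span_le
  rintro A B g' ⟨Y, g, h, hg, _, rfl⟩
  exact I.comp_mem_left h hg

theorem mul_le_right {I J : CatIdeal C} : I.mul J ≤ J := by
  apply span_le
  rintro A B g' ⟨Y, g, h, _, hh, rfl⟩
  exact J.comp_mem_right g hh

theorem mul_mono {I I' J J' : CatIdeal C} (h1 : I ≤ I') (h2 : J ≤ J') :
    I.mul J ≤ I'.mul J' := by
  apply span_le
  rintro A B g' ⟨Y, g, h, hg, hh, rfl⟩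
  exact mem_mul_of (h1 hg) (h2 hh)

theorem sum_mem (I : CatIdeal C) {X Y : C} {ι : Type*} (s : Finset ι) (f : ι → (X ⟶ Y))
    (h : ∀ i ∈ s, I.mem (f i)) : I.mem (∑ i ∈ s, f i) := by
  classical
  induction s using Finset.induction with
  | empty => simpa using I.zero_mem
  | insert _ _ hx ih =>
    rw [Finset.sum_insert hx]
    exact I.add_mem (h _ (Finset.mem_insert_self _ _))
      (ih fun i hi => h i (Finset.mem_insert_of_mem hi))

end CatIdeal

section EndLemmas

variable {C : Type u} [Category.{v} C] [Preadditive C]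

theorem end_local_cases {X : C} (h : IsLocalRing (End X)) (a : X ⟶ X) :
    IsIso a ∨ IsIso (𝟙 X - a) := by
  have hadd : End.of a + (1 - End.of a) = 1 := by abel
  rcases IsLocalRing.isUnit_or_isUnit_of_add_one hadd with hu | hu
  · exact Or.inl ((isUnit_iff_isIso _).1 hu)
  · exact Or.inr ((isUnit_iff_isIso _).1 hu)

theorem end_local_of_cases {X : C} (hnt : ¬ IsZero X)
    (h : ∀ a : X ⟶ X, IsIso a ∨ IsIso (𝟙 X - a)) : IsLocalRing (End X) := by
  haveI : Nontrivial (End X) :=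
    ⟨1, 0, fun h0 => hnt ((IsZero.iff_id_eq_zero X).2 h0)⟩
  refine ⟨fun {a b} hab => ?_⟩
  rcases h (End.asHom a) with hi | hi
  · exact Or.inl ((isUnit_iff_isIso a).2 hi)
  · right
    have h1 : IsUnit ((1 : End X) - a) := (isUnit_iff_isIso ((1 : End X) - a)).2 hi
    have hb : b = (1 : End X) - a := by rw [← hab]; abel
    rwa [hb]

theorem nonzero_of_localEnd {X : C} (h : IsLocalRing (End X)) : ¬ IsZero X := by
  intro hz
  exact one_ne_zero (α := End X) ((IsZero.iff_id_eq_zero X).1 hz)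

theorem indec_of_localEnd {X : C} (h : IsLocalRing (End X)) : IsIndecomposableObj C X := by
  refine ⟨nonzero_of_localEnd h, fun e he => ?_⟩
  rcases end_local_cases h e with hu | hu
  · right
    exact (cancel_epi e).1 (by rw [he, Category.comp_id])
  · left
    refine (cancel_epi (𝟙 X - e)).1 ?_
    simp [Preadditive.sub_comp, he]

theorem localEnd_of_indec (hKS : IsKrullSchmidt C) {X : C} (hX : IsIndecomposableObj C X) :
    IsLocalRing (End X) := by
  obtain ⟨n, Y, hloc, p, s, hsp, horth, hsum⟩ := hKS X
  have hidem : ∀ i, (p i ≫ s i) ≫ (p i ≫ s i) = p i ≫ s i := fun i => by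
    rw [Category.assoc, ← Category.assoc (s i), hsp i, Category.id_comp]
  obtain ⟨i, hi⟩ : ∃ i, p i ≫ s i = 𝟙 X := by
    by_contra hc
    push_neg at hc
    apply hX.1
    rw [IsZero.iff_id_eq_zero, ← hsum]
    refine Finset.sum_eq_zero fun i _ => ?_
    rcases hX.2 _ (hidem i) with h | h
    · exact h
    · exact absurd h (hc i)
  have hpi : IsIso (p i) := ⟨s i, hi, hsp i⟩
  have hsi : IsIso (s i) := ⟨p i, hsp i, hi⟩
  have key : ∀ c : X ⟶ X, c = p i ≫ (s i ≫ c ≫ p i) ≫ s i := by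
    intro c
    simp only [Category.assoc]
    rw [hi, Category.comp_id, ← Category.assoc, hi, Category.id_comp]
  apply end_local_of_cases hX.1
  intro a
  rcases end_local_cases (hloc i) (s i ≫ a ≫ p i) with hu | hu
  · left
    rw [key a]
    infer_instance
  · right
    have heq : 𝟙 X - a = p i ≫ (𝟙 (Y i) - s i ≫ a ≫ p i) ≫ s i := by
      rw [Preadditive.sub_comp, Preadditive.comp_sub, Category.id_comp, hi]
      congr 1
      exact key a
    rw [heq]
    infer_instance

end EndLemmas

section Jac

open CategoryTheory CategoryTheory.Limits CategoryTheory.Preadditive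

variable {C : Type u} [Category.{v} C] [Preadditive C]

theorem isIso_one_sub_swap {X Y : C} {f : X ⟶ Y} {g : Y ⟶ X}
    (h : IsIso (𝟙 X - f ≫ g)) : IsIso (𝟙 Y - g ≫ f) := by
  set u := CategoryTheory.inv (𝟙 X - f ≫ g) with hu
  have h1 : u - f ≫ g ≫ u = 𝟙 X := by
    have := IsIso.hom_inv_id (𝟙 X - f ≫ g)
    rwa [sub_comp, Category.id_comp, Category.assoc] at this
  have h2 : u - u ≫ f ≫ g = 𝟙 X := by
    have := IsIso.inv_hom_id (𝟙 X - f ≫ g)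
    rwa [comp_sub, Category.comp_id] at this
  refine ⟨⟨𝟙 Y + g ≫ u ≫ f, ?_, ?_⟩⟩
  · have key : g ≫ u ≫ f - g ≫ f ≫ g ≫ u ≫ f = g ≫ f := by
      calc g ≫ u ≫ f - g ≫ f ≫ g ≫ u ≫ f = g ≫ (u - f ≫ g ≫ u) ≫ f := by
            simp only [sub_comp, comp_sub, Category.assoc]
        _ = g ≫ f := by rw [h1, Category.id_comp]
    calc (𝟙 Y - g ≫ f) ≫ (𝟙 Y + g ≫ u ≫ f)
        = 𝟙 Y + (g ≫ u ≫ f - g ≫ f ≫ g ≫ u ≫ f) - g ≫ f := by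
          simp only [sub_comp, comp_add, add_comp, comp_sub, Category.id_comp,
            Category.comp_id, Category.assoc]
          abel
      _ = 𝟙 Y := by rw [key]; abel
  · have key : g ≫ u ≫ f - g ≫ u ≫ f ≫ g ≫ f = g ≫ f := by
      calc g ≫ u ≫ f - g ≫ u ≫ f ≫ g ≫ f = g ≫ (u - u ≫ f ≫ g) ≫ f := by
            simp only [sub_comp, comp_sub, Category.assoc]
        _ = g ≫ f := by rw [h2, Category.id_comp]
    calc (𝟙 Y + g ≫ u ≫ f) ≫ (𝟙 Y - g ≫ f)
        = 𝟙 Y + (g ≫ u ≫ f - g ≫ u ≫ f ≫ g ≫ f) - g ≫ f := by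
          simp only [sub_comp, comp_add, add_comp, comp_sub, Category.id_comp,
            Category.comp_id, Category.assoc]
          abel
      _ = 𝟙 Y := by rw [key]; abel

/-- The Jacobson-radical-style ideal. -/
def jacIdeal (C : Type u) [Category.{v} C] [Preadditive C] : CatIdeal C where
  mem {X Y} f := ∀ g : Y ⟶ X, IsIso (𝟙 X - f ≫ g)
  zero_mem := by
    intro X Y g
    rw [zero_comp, sub_zero]
    infer_instance
  add_mem := by
    intro X Y f f' hf hf' g
    have hAi : IsIso (𝟙 X - f ≫ g) := hf g
    set A := 𝟙 X - f ≫ g with hA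
    set u := CategoryTheory.inv A with hu
    have hAu : A ≫ u = 𝟙 X := IsIso.hom_inv_id A
    have hiso : IsIso (𝟙 X - u ≫ f' ≫ g) := by
      apply isIso_one_sub_swap (f := f' ≫ g) (g := u)
      rw [Category.assoc]
      exact hf' (g ≫ u)
    have heq : 𝟙 X - (f + f') ≫ g = A ≫ (𝟙 X - u ≫ f' ≫ g) := by
      rw [comp_sub, Category.comp_id, ← Category.assoc, hAu, Category.id_comp, add_comp, hA]
      abel
    rw [heq]
    infer_instance
  comp_mem_left := by
    intro X Y Z f g hf h
    rw [Category.assoc]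
    exact hf (g ≫ h)
  comp_mem_right := by
    intro X Y Z f g hg h
    rw [Category.assoc]
    refine isIso_one_sub_swap (f := g ≫ h) (g := f) ?_
    rw [Category.assoc]
    exact hg (h ≫ f)

theorem gens_sub_jacIdeal (hKS : IsKrullSchmidt C) {X Y : C} {f : X ⟶ Y}
    (hX : IsIndecomposableObj C X) (hY : IsIndecomposableObj C Y) (hf : ¬ IsIso f) :
    (jacIdeal C).mem f := by
  intro g
  have hloc := localEnd_of_indec hKS hX
  rcases end_local_cases hloc (f ≫ g) with hu | hu
  · exfalso
    apply hf
    haveI := hu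
    set r := g ≫ CategoryTheory.inv (f ≫ g) with hr
    have hfr : f ≫ r = 𝟙 X := by rw [hr, ← Category.assoc, IsIso.hom_inv_id]
    have hidem : (r ≫ f) ≫ (r ≫ f) = r ≫ f := by
      rw [Category.assoc, ← Category.assoc f, hfr, Category.id_comp]
    rcases hY.2 _ hidem with h0 | h1
    · exfalso
      apply hX.1
      rw [IsZero.iff_id_eq_zero, ← hfr]
      have hf0 : f = 0 := by
        have h002 : f = f ≫ r ≫ f := by rw [← Category.assoc, hfr, Category.id_comp]
        rw [h002, h0, comp_zero]
      rw [hf0, zero_comp]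
    · exact ⟨r, hfr, h1⟩
  · exact hu

theorem not_id_mem_jacIdeal {X : C} (hX : ¬ IsZero X) : ¬ (jacIdeal C).mem (𝟙 X) := by
  intro h
  have h0 : IsIso (0 : X ⟶ X) := by simpa using h (𝟙 X)
  haveI := h0
  apply hX
  rw [IsZero.iff_id_eq_zero]
  calc 𝟙 X = (0 : X ⟶ X) ≫ CategoryTheory.inv (0 : X ⟶ X) := (IsIso.hom_inv_id _).symm
    _ = 0 := zero_comp

theorem not_id_mem_radical (hKS : IsKrullSchmidt C) {X : C} (hX : ¬ IsZero X) :
    ¬ (catRadical C).mem (𝟙 X) := by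
  intro h
  have h' : ∀ J : CatIdeal C, (∀ {A B : C} {g : A ⟶ B},
      (IsIndecomposableObj C A ∧ IsIndecomposableObj C B ∧ ¬ IsIso g) → J.mem g) →
      J.mem (𝟙 X) := h
  exact not_id_mem_jacIdeal hX
    (h' (jacIdeal C) fun hg => gens_sub_jacIdeal hKS hg.1 hg.2.1 hg.2.2)

theorem le_radical_of_no_id (hKS : IsKrullSchmidt C) {I : CatIdeal C}
    (hI : ∀ X : C, ¬ IsZero X → ¬ I.mem (𝟙 X)) : I ≤ catRadical C := by
  intro X Y f hf
  show ∀ J : CatIdeal C, (∀ {A B : C} {g : A ⟶ B},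
      (IsIndecomposableObj C A ∧ IsIndecomposableObj C B ∧ ¬ IsIso g) → J.mem g) → J.mem f
  intro J hJ
  obtain ⟨n, A, hlocA, p, s, hsp, _, hsum⟩ := hKS X
  obtain ⟨m, B, hlocB, q, t, htq, _, hsumB⟩ := hKS Y
  have hf_eq : f = ∑ i : Fin n, ∑ j : Fin m, p i ≫ (s i ≫ f ≫ q j) ≫ t j := by
    calc f = (𝟙 X) ≫ f ≫ (𝟙 Y) := by simp
      _ = (∑ i : Fin n, p i ≫ s i) ≫ f ≫ (∑ j : Fin m, q j ≫ t j) := by rw [hsum, hsumB]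
      _ = ∑ i : Fin n, ∑ j : Fin m, p i ≫ (s i ≫ f ≫ q j) ≫ t j := by
          simp only [Preadditive.sum_comp, Preadditive.comp_sum, Category.assoc]
          exact Finset.sum_comm
  rw [hf_eq]
  apply CatIdeal.sum_mem
  intro i _
  apply CatIdeal.sum_mem
  intro j _
  have hc : I.mem (s i ≫ f ≫ q j) := I.comp_mem_right (s i) (I.comp_mem_left (q j) hf)
  by_cases hiso : IsIso (s i ≫ f ≫ q j)
  · exfalso
    apply hI (A i) (nonzero_of_localEnd (hlocA i))
    haveI := hiso
    have := I.comp_mem_left (CategoryTheory.inv (s i ≫ f ≫ q j)) hc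
    rwa [IsIso.hom_inv_id] at this
  · exact J.comp_mem_right (p i) (J.comp_mem_left (t j)
      (hJ ⟨indec_of_localEnd (hlocA i), indec_of_localEnd (hlocB j), hiso⟩))

end Jac

section Tpow

open Ordinal

namespace CatIdeal

variable {C : Type u} [Category.{v} C] [Preadditive C]

theorem tpow_zero' (I : CatIdeal C) : tpow I (0 : Ordinal.{w}) = top C := by
  rw [tpow]
  simp

theorem tpow_limit' (I : CatIdeal C) {α : Ordinal.{w}} (h : Order.IsSuccLimit α) :
    tpow I α = iInter (fun β : {β : Ordinal.{w} // β < α} => tpow I β.1) := by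
  rw [tpow, dif_neg (Ordinal.isSuccLimit_iff.1 h).1, dif_pos h]

theorem tpow_succ_small (I : CatIdeal C) {α : Ordinal.{w}} (h0 : α ≠ 0) (hl : ¬ Order.IsSuccLimit α)
    (hs : ¬ Ordinal.omega0 ≤ α) :
    tpow I α = (tpow I (Ordinal.pred α)).mul I := by
  rw [tpow, dif_neg h0, dif_neg hl, if_neg hs]

theorem tpow_succ_big (I : CatIdeal C) {α : Ordinal.{w}} (h0 : α ≠ 0) (hl : ¬ Order.IsSuccLimit α)
    (hs : Ordinal.omega0 ≤ α) :
    tpow I α = (tpow I (Ordinal.pred α)).mul (tpow I (limitPart α)) := by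
  rw [tpow, dif_neg h0, dif_neg hl, if_pos hs]

theorem tpow_le_pred (I : CatIdeal C) {α : Ordinal.{w}} (h0 : α ≠ 0) (hl : ¬ Order.IsSuccLimit α) :
    tpow I α ≤ tpow I (Ordinal.pred α) := by
  by_cases hs : Ordinal.omega0 ≤ α
  · rw [tpow_succ_big I h0 hl hs]; exact mul_le_left
  · rw [tpow_succ_small I h0 hl hs]; exact mul_le_left

theorem tpow_antitone (I : CatIdeal C) :
    ∀ β α : Ordinal.{w}, α ≤ β → tpow I β ≤ tpow I α := by
  intro β
  induction β using Ordinal.induction with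
  | h β IH =>
    intro α hαβ
    rcases eq_or_lt_of_le hαβ with rfl | hlt
    · exact le_refl' _
    rcases Ordinal.zero_or_succ_or_isSuccLimit β with h0 | hsucc | hlim
    · exact absurd (h0 ▸ hlt) (not_lt_of_ge (zero_le (a := α)))
    · have h0 : β ≠ 0 := by
        rintro rfl
        exact not_lt_of_ge (zero_le (a := α)) hlt
      have hl : ¬ Order.IsSuccLimit β := by
        obtain ⟨γ, rfl⟩ := hsucc
        exact Order.not_isSuccLimit_succ γ
      have hpred : Ordinal.pred β < β := Ordinal.pred_lt_iff_not_isSuccPrelimit.2 (by obtain ⟨γ, rfl⟩ := hsucc; exact Order.not_isSuccPrelimit_succ γ)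
      have hαpred : α ≤ Ordinal.pred β := by
        obtain ⟨γ, rfl⟩ := hsucc
        rw [Ordinal.pred_succ]
        exact Order.lt_succ_iff.1 hlt
      intro X Y f hf
      exact IH _ hpred α hαpred (tpow_le_pred I h0 hl hf)
    · rw [tpow_limit' I hlim]
      intro X Y f hf
      exact hf ⟨α, hlt⟩

theorem le_tpow {I J : CatIdeal C} (hJI : J ≤ I) (hJJ : J ≤ J.mul J) :
    ∀ α : Ordinal.{w}, J ≤ tpow I α := by
  intro α
  induction α using Ordinal.induction with
  | h α IH =>
    rcases Ordinal.zero_or_succ_or_isSuccLimit α with h0 | hsucc | hlim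
    · subst h0
      rw [tpow_zero']
      intro X Y f _
      trivial
    · have h0 : α ≠ 0 := by
        obtain ⟨γ, rfl⟩ := hsucc
        exact Ordinal.succ_ne_zero γ
      have hl : ¬ Order.IsSuccLimit α := by
        obtain ⟨γ, rfl⟩ := hsucc
        exact Order.not_isSuccLimit_succ γ
      have hpred : Ordinal.pred α < α := Ordinal.pred_lt_iff_not_isSuccPrelimit.2 (by obtain ⟨γ, rfl⟩ := hsucc; exact Order.not_isSuccPrelimit_succ γ)
      rcases le_or_gt Ordinal.omega0 α with hs | hs
      · rw [tpow_succ_big I h0 hl hs]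
        intro X Y f hf
        exact mul_mono (IH _ hpred) (IH _ (limitPart_lt h0 hl)) (hJJ hf)
      · rw [tpow_succ_small I h0 hl (not_le.2 hs)]
        intro X Y f hf
        exact mul_mono (IH _ hpred) hJI (hJJ hf)
    · rw [tpow_limit' I hlim]
      intro X Y f hf
      intro β
      exact IH β.1 β.2 hf

end CatIdeal

end Tpow

section Small

open CategoryTheory CategoryTheory.Limits

theorem small_catIdeal (C : Type u) [Category.{v} C] [Preadditive C] [EssentiallySmall.{v} C] :
    Small.{v} (CatIdeal C) := by
  let e := equivSmallModel C
  have hconj : ∀ {X Y : C} (f : X ⟶ Y),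
      e.inverse.map (e.functor.map f)
        = e.unitIso.inv.app X ≫ f ≫ e.unitIso.hom.app Y := by
    intro X Y f
    have hnat := e.unitIso.hom.naturality f
    simp only [Functor.id_map, Functor.comp_map] at hnat
    rw [hnat, ← Category.assoc, e.unitIso.inv_hom_id_app X, Category.id_comp]
  have key : ∀ (K : CatIdeal C) {X Y : C} (f : X ⟶ Y),
      K.mem f ↔ K.mem (e.inverse.map (e.functor.map f)) := by
    intro K X Y f
    constructor
    · intro hf
      rw [hconj]
      exact K.comp_mem_right _ (K.comp_mem_left _ hf)
    · intro hf
      have hfe : f = e.unitIso.hom.app X ≫ e.inverse.map (e.functor.map f)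
          ≫ e.unitIso.inv.app Y := by
        rw [hconj f]
        simp
      rw [hfe]
      exact K.comp_mem_right _ (K.comp_mem_left _ hf)
  apply small_of_injective (f := fun (I : CatIdeal C) (x y : SmallModel C) =>
    {g : x ⟶ y | I.mem (e.inverse.map g)})
  intro I J h
  apply CatIdeal.ext'
  intro X Y f
  have h2 := congrFun (congrFun h (e.functor.obj X)) (e.functor.obj Y)
  have h3 : I.mem (e.inverse.map (e.functor.map f)) ↔
      J.mem (e.inverse.map (e.functor.map f)) := Set.ext_iff.1 h2 (e.functor.map f)
  rw [key I f, key J f]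
  exact h3

end Small

end Aux
open CategoryTheory in
/-- In a Krull-Schmidt category, the transfinite radical is the unique
maximal idempotent ideal containing no identity morphisms of nonzero objects. -/
theorem stmt3 {C : Type u} [CategoryTheory.Category.{v} C] [CategoryTheory.Preadditive C] [CategoryTheory.Limits.HasFiniteBiproducts C] [CategoryTheory.EssentiallySmall.{v} C] (hKS : IsKrullSchmidt C) :
    (catTransRadical C).IsIdempotent ∧
      (∀ X : C, ¬ CategoryTheory.Limits.IsZero X → ¬ (catTransRadical C).mem (𝟙 X)) ∧
      (∀ I : CatIdeal C, I.IsIdempotent →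
        (∀ X : C, ¬ CategoryTheory.Limits.IsZero X → ¬ I.mem (𝟙 X)) →
        I ≤ catTransRadical C) := by
  classical
  haveI hsmall : Small.{v} (CatIdeal C) := small_catIdeal C
  set R := catRadical C with hR
  -- the index of an ideal in the range of `tpow R`
  let idx : Set.range (fun α : Ordinal.{v} => CatIdeal.tpow R α) → Ordinal.{v} :=
    fun J => sInf {α : Ordinal.{v} | CatIdeal.tpow R α = J.1}
  have hidx_mem : ∀ J, CatIdeal.tpow R (idx J) = J.1 := by
    rintro ⟨J, α, hα⟩
    exact csInf_mem (s := {α : Ordinal.{v} | CatIdeal.tpow R α = J}) ⟨α, hα⟩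
  haveI : Small.{v} (Set.range idx) := small_of_surjective Set.rangeFactorization_surjective
  obtain ⟨γ, hγ⟩ : ∃ γ : Ordinal.{v}, ∀ J, idx J ≤ γ :=
    ⟨⨆ J, idx J, fun J => le_ciSup (Ordinal.bddAbove_of_small (s := Set.range idx)) J⟩
  have hstab : ∀ α : Ordinal.{v}, γ ≤ α → CatIdeal.tpow R α = CatIdeal.tpow R γ := by
    intro α hα
    have h1 : idx ⟨_, Set.mem_range_self α⟩ ≤ γ := hγ _
    have h2 : CatIdeal.tpow R (idx ⟨_, Set.mem_range_self α⟩) = CatIdeal.tpow R α :=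
      hidx_mem _
    apply CatIdeal.le_antisymm'
    · exact CatIdeal.tpow_antitone R α γ hα
    · intro X Y f hf
      rw [← h2]
      exact CatIdeal.tpow_antitone R γ _ h1 hf
  have hstar : catTransRadical C = CatIdeal.tpow R γ := by
    apply CatIdeal.le_antisymm'
    · intro X Y f hf
      exact hf γ
    · intro X Y f hf
      intro α
      show (CatIdeal.tpow R α).mem f
      rcases le_total α γ with h | h
      · exact CatIdeal.tpow_antitone R γ α h hf
      · rw [hstab α h]
        exact hf
  set lam := γ + Ordinal.omega0 with hlam
  have hlim : Order.IsSuccLimit lam := Ordinal.isSuccLimit_add γ Ordinal.isSuccLimit_omega0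
  have hγlam : γ ≤ lam := le_self_add
  have hlam_eq : CatIdeal.tpow R lam = CatIdeal.tpow R γ := hstab _ hγlam
  have hsucc_eq : CatIdeal.tpow R (lam + 1) = CatIdeal.tpow R γ :=
    hstab _ (le_trans hγlam (le_self_add))
  obtain ⟨q, hq⟩ : Ordinal.omega0 ∣ lam := (Ordinal.isSuccLimit_iff_omega0_dvd.1 hlim).2
  have hlp : CatIdeal.limitPart (lam + 1) = lam := by
    rw [CatIdeal.limitPart, hq, Ordinal.mul_add_div q Ordinal.omega0_ne_zero 1,
      Ordinal.div_eq_zero_of_lt Ordinal.one_lt_omega0, add_zero]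
  have h0' : lam + 1 ≠ 0 := by
    rw [Ordinal.add_one_eq_succ]
    exact Ordinal.succ_ne_zero lam
  have hl' : ¬ Order.IsSuccLimit (lam + 1) := by
    rw [Ordinal.add_one_eq_succ]
    exact Order.not_isSuccLimit_succ lam
  have hω : Ordinal.omega0 ≤ lam + 1 :=
    le_trans (le_add_self) (le_self_add)
  have hmul : CatIdeal.tpow R (lam + 1)
      = (CatIdeal.tpow R lam).mul (CatIdeal.tpow R lam) := by
    rw [CatIdeal.tpow_succ_big R h0' hl' hω, hlp, Ordinal.add_one_eq_succ, Ordinal.pred_succ]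
  have hidem : (catTransRadical C).IsIdempotent := by
    show catTransRadical C = (catTransRadical C).mul (catTransRadical C)
    rw [hstar, ← hlam_eq, ← hmul, hsucc_eq, hlam_eq]
  -- the first power is contained in the radical
  have h1lt : (1 : Ordinal.{v}) ≠ 0 := one_ne_zero
  have h1nl : ¬ Order.IsSuccLimit (1 : Ordinal.{v}) := by
    rw [← Ordinal.succ_zero]
    exact Order.not_isSuccLimit_succ 0
  have h1s : ¬ Ordinal.omega0 ≤ (1 : Ordinal.{v}) := not_le.2 Ordinal.one_lt_omega0
  have hp1 : Ordinal.pred (1 : Ordinal.{v}) = 0 := by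
    rw [← Ordinal.succ_zero, Ordinal.pred_succ]
  have hT1 : CatIdeal.tpow R (1 : Ordinal.{v}) = (CatIdeal.top C).mul R := by
    rw [CatIdeal.tpow_succ_small R h1lt h1nl h1s, hp1, CatIdeal.tpow_zero']
  have hno : ∀ X : C, ¬ CategoryTheory.Limits.IsZero X → ¬ (catTransRadical C).mem (𝟙 X) := by
    intro X hX hmem
    have h1 : (CatIdeal.tpow R (1 : Ordinal.{v})).mem (𝟙 X) := hmem 1
    rw [hT1] at h1
    exact not_id_mem_radical hKS hX (CatIdeal.mul_le_right h1)
  refine ⟨hidem, hno, ?_⟩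
  intro I hIdem hno'
  have hle : I ≤ R := le_radical_of_no_id hKS hno'
  have hmul' : I ≤ I.mul I := by
    rw [← hIdem]
    exact CatIdeal.le_refl' I
  intro X Y f hf
  intro α
  exact CatIdeal.le_tpow hle hmul' α hf
end

section
/- Let Λ be a ring, S a set of finitely presented left Λ-modules, and M a module possessing an S-filtration (M_α | α ≤ σ). Then for any submodule N ⊆ M appearing in the filtration and any finite subset X ⊆ M, there exists a submodule P ⊆ M such that N ∪ X ⊆ P, P/N is finitely presented, and P/N is S-filtered. -/
universe u

variable {R : Type u} [Ring R]

/-- `F` is an `S`-filtration of `M` of length `σ`: a continuous well-ordered chain of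
submodules starting at `0`, ending at `M`, with consecutive quotients isomorphic to
modules from `S`. -/
def IsSFiltration {M : Type u} [AddCommGroup M] [Module R M]
    (S : Set (ModuleCat.{u} R)) (σ : Ordinal.{u}) (F : Ordinal.{u} → Submodule R M) : Prop :=
  F 0 = ⊥ ∧ F σ = ⊤ ∧
  (∀ α β : Ordinal.{u}, α ≤ β → β ≤ σ → F α ≤ F β) ∧
  (∀ α : Ordinal.{u}, α ≤ σ → Order.IsSuccLimit α → F α = ⨆ β : Set.Iio α, F β) ∧
  (∀ α : Ordinal.{u}, α < σ → ∃ N ∈ S,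
    Nonempty ((↥(F (α + 1)) ⧸ Submodule.comap (F (α + 1)).subtype (F α)) ≃ₗ[R] ↥N))

/-- A module is `S`-filtered if it possesses at least one `S`-filtration. -/
def IsSFiltered (S : Set (ModuleCat.{u} R)) (M : Type u) [AddCommGroup M] [Module R M] : Prop :=
  ∃ (σ : Ordinal.{u}) (F : Ordinal.{u} → Submodule R M), IsSFiltration S σ F

variable {R : Type u} [Ring R] {M : Type u} [AddCommGroup M] [Module R M]

lemma quot_map_equiv {W Q : Type u} [AddCommGroup W] [Module R W] [AddCommGroup Q] [Module R Q]
    (f : W →ₗ[R] Q) {A B : Submodule R W} (hAB : A ≤ B) (hker : LinearMap.ker f ≤ A) :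
    Nonempty ((↥(Submodule.map f B) ⧸ Submodule.comap (Submodule.map f B).subtype (Submodule.map f A))
      ≃ₗ[R] (↥B ⧸ Submodule.comap B.subtype A)) := by
  set A' := Submodule.comap (Submodule.map f B).subtype (Submodule.map f A)
  let r : ↥B →ₗ[R] ↥(Submodule.map f B) :=
    f.restrict (fun x hx => Submodule.mem_map_of_mem hx)
  let g : ↥B →ₗ[R] (↥(Submodule.map f B) ⧸ A') := A'.mkQ.comp r
  have hsurj : Function.Surjective g := by
    apply Function.Surjective.comp (Submodule.mkQ_surjective A')
    rintro ⟨y, b, hb, rfl⟩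
    exact ⟨⟨b, hb⟩, rfl⟩
  have hkg : LinearMap.ker g = Submodule.comap B.subtype A := by
    ext ⟨x, hx⟩
    simp only [LinearMap.mem_ker, g, LinearMap.comp_apply, Submodule.mkQ_apply,
      Submodule.Quotient.mk_eq_zero, Submodule.mem_comap, A']
    constructor
    · rintro h
      have : f x ∈ Submodule.map f A := h
      obtain ⟨a, ha, hfa⟩ := this
      have : x - a ∈ LinearMap.ker f := by simp [LinearMap.mem_ker, map_sub, hfa]
      have := hker this
      simpa using A.add_mem this ha
    · intro h
      exact Submodule.mem_map_of_mem h
  exact ⟨((Submodule.quotEquivOfEq _ _ hkg.symm).trans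
    (LinearMap.quotKerEquivOfSurjective g hsurj)).symm⟩

lemma fp_of_subsingleton (Q : Type u) [AddCommGroup Q] [Module R Q] [Subsingleton Q] :
    Module.FinitePresentation R Q := by
  have hsurj : Function.Surjective (0 : R →ₗ[R] Q) := fun q => ⟨0, Subsingleton.elim _ _⟩
  refine Module.finitePresentation_of_surjective (0 : R →ₗ[R] Q) hsurj ?_
  have : LinearMap.ker (0 : R →ₗ[R] Q) = ⊤ := by ext x; simp
  rw [this]
  exact ⟨{1}, by simp [Ideal.span_singleton_one]⟩

lemma fp_equiv {Q₁ Q₂ : Type u} [AddCommGroup Q₁] [Module R Q₁] [AddCommGroup Q₂] [Module R Q₂]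
    (e : Q₁ ≃ₗ[R] Q₂) (h : Module.FinitePresentation R Q₁) : Module.FinitePresentation R Q₂ := by
  refine Module.finitePresentation_of_surjective (h := h) e.toLinearMap e.surjective ?_
  rw [LinearMap.ker_eq_bot.mpr e.injective]
  exact Submodule.fg_bot

lemma quot_quot_ker_equiv {W : Type u} [AddCommGroup W] [Module R W] (A B : Submodule R W)
    (hAB : A ≤ B) :
    ∃ l : (W ⧸ A) →ₗ[R] (W ⧸ B), Function.Surjective l ∧
      Nonempty (↥(LinearMap.ker l) ≃ₗ[R] (↥B ⧸ Submodule.comap B.subtype A)) := by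
  refine ⟨Submodule.mapQ A B LinearMap.id hAB, ?_, ?_⟩
  · intro y
    obtain ⟨x, rfl⟩ := Submodule.mkQ_surjective B y
    exact ⟨A.mkQ x, rfl⟩
  · have hker : LinearMap.ker (Submodule.mapQ A B LinearMap.id hAB) = Submodule.map A.mkQ B := by
      rw [Submodule.mapQ, Submodule.ker_liftQ]
      congr 1
      rw [LinearMap.ker_comp, Submodule.ker_mkQ]
      simp
    obtain ⟨e⟩ := quot_map_equiv A.mkQ hAB (le_of_eq (Submodule.ker_mkQ A))
    have hbot : Submodule.comap (Submodule.map A.mkQ B).subtype (Submodule.map A.mkQ A) = ⊥ := by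
      rw [Submodule.mkQ_map_self]
      simp
    exact ⟨(LinearEquiv.ofEq _ _ hker).trans
      (((Submodule.quotEquivOfEqBot _ hbot).symm).trans e)⟩

-- helper 2: B/A ≅ D/C when B ⊔ C = D, B ⊓ C ≤ A ≤ B, A ≤ C
lemma quot_equiv_of_sup {A B C D : Submodule R M} (hBD : B ⊔ C = D) (hAB : A ≤ B)
    (hinf : B ⊓ C ≤ A) (hAC : A ≤ C) :
    Nonempty ((↥B ⧸ Submodule.comap B.subtype A) ≃ₗ[R] (↥D ⧸ Submodule.comap D.subtype C)) := by
  have hBD' : B ≤ D := hBD ▸ le_sup_left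
  let g : ↥B →ₗ[R] (↥D ⧸ Submodule.comap D.subtype C) :=
    (Submodule.comap D.subtype C).mkQ.comp (Submodule.inclusion hBD')
  have hsurj : Function.Surjective g := by
    rintro y
    obtain ⟨⟨d, hd⟩, rfl⟩ := Submodule.mkQ_surjective _ y
    rw [← hBD] at hd
    obtain ⟨b, hb, c, hc, rfl⟩ := Submodule.mem_sup.mp hd
    refine ⟨⟨b, hb⟩, ?_⟩
    show Submodule.Quotient.mk _ = Submodule.Quotient.mk _
    rw [Submodule.Quotient.eq]
    show (⟨b, _⟩ : ↥D) - ⟨b + c, _⟩ ∈ Submodule.comap D.subtype C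
    simpa using C.neg_mem hc
  have hkg : LinearMap.ker g = Submodule.comap B.subtype A := by
    ext ⟨x, hx⟩
    simp only [LinearMap.mem_ker, g, LinearMap.comp_apply, Submodule.mkQ_apply,
      Submodule.Quotient.mk_eq_zero, Submodule.mem_comap]
    constructor
    · intro h
      exact hinf ⟨hx, h⟩
    · intro h
      exact hAC h
  exact ⟨(Submodule.quotEquivOfEq _ _ hkg.symm).trans
    (LinearMap.quotKerEquivOfSurjective g hsurj)⟩


lemma exists_gen (S : Set (ModuleCat.{u} R)) (hS : ∀ N ∈ S, Module.FinitePresentation R N)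
    (σ : Ordinal.{u}) (F : Ordinal.{u} → Submodule R M)
    (hmono : ∀ α β : Ordinal.{u}, α ≤ β → β ≤ σ → F α ≤ F β)
    (hquot : ∀ α : Ordinal.{u}, α < σ → ∃ N ∈ S,
      Nonempty ((↥(F (α + 1)) ⧸ Submodule.comap (F (α + 1)).subtype (F α)) ≃ₗ[R] ↥N))
    (α : Ordinal.{u}) (hα : α < σ) :
    ∃ A : Finset M, ↑A ⊆ (F (α+1) : Set M) ∧ F α ⊔ Submodule.span R ↑A = F (α+1) ∧
      (F α ⊓ Submodule.span R ↑A).FG := by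
  classical
  obtain ⟨N, hN, ⟨e⟩⟩ := hquot α hα
  have hNfp := hS N hN
  set Fα' := Submodule.comap (F (α+1)).subtype (F α)
  set Qα := ↥(F (α+1)) ⧸ Fα'
  have hfp : Module.FinitePresentation R Qα := by
    refine Module.finitePresentation_of_surjective (h := hNfp) e.symm.toLinearMap
      e.symm.surjective ?_
    rw [LinearMap.ker_eq_bot.mpr e.symm.injective]
    exact Submodule.fg_bot
  obtain ⟨t, ht, -⟩ := hfp.out
  set π : ↥(F (α+1)) →ₗ[R] Qα := Fα'.mkQ
  have hπs : Function.Surjective π := Submodule.mkQ_surjective _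
  -- choose preimages
  choose pre hpre using hπs
  set t'' : Finset ↥(F (α+1)) := t.image pre
  set A : Finset M := t''.image Subtype.val
  have hAsub : ↑A ⊆ (F (α+1) : Set M) := by
    intro x hx
    simp only [A, Finset.coe_image, Set.mem_image] at hx
    obtain ⟨y, _, rfl⟩ := hx
    exact y.2
  have hspan : ∀ y : ↥(F (α+1)), y ∈ Submodule.span R (↑t'' : Set ↥(F (α+1))) →
      (y : M) ∈ Submodule.span R (↑A : Set M) := by
    intro y hy
    have hco : (↑A : Set M) = (F (α+1)).subtype '' ↑t'' := by
      simp [A, Finset.coe_image]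
    rw [hco, ← Submodule.map_span]
    exact Submodule.mem_map_of_mem hy
  have key : ∀ x ∈ F (α+1), x ∈ F α ⊔ Submodule.span R ↑A := by
    intro x hx
    have hxq : π ⟨x, hx⟩ ∈ Submodule.map π (Submodule.span R (↑t'' : Set ↥(F (α+1)))) := by
      rw [Submodule.map_span]
      have : π '' ↑t'' = ↑t := by
        ext q; simp only [Set.mem_image, Finset.mem_coe, t'']
        constructor
        · rintro ⟨y, hy, rfl⟩
          obtain ⟨z, hz, rfl⟩ := Finset.mem_image.mp hy
          rw [hpre]; exact hz
        · intro hq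
          exact ⟨pre q, Finset.mem_image_of_mem _ hq, hpre q⟩
      rw [this, ht]
      trivial
    obtain ⟨y, hy, hxy⟩ := hxq
    have hyx : x - y.val ∈ F α := by
      have : (⟨x, hx⟩ : ↥(F (α+1))) - y ∈ LinearMap.ker π := by
        rw [LinearMap.mem_ker, map_sub, hxy, sub_self]
      have h2 : (⟨x, hx⟩ : ↥(F (α+1))) - y ∈ Fα' := by
        rwa [Submodule.ker_mkQ] at this
      exact h2
    have hyA : y.val ∈ Submodule.span R (↑A : Set M) := hspan y hy
    have : x = (x - y.val) + y.val := by abel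
    rw [this]
    exact Submodule.add_mem_sup hyx hyA
  have hsup : F α ⊔ Submodule.span R ↑A = F (α+1) := by
    apply le_antisymm
    · refine sup_le (hmono α (α+1) (le_of_lt (lt_add_one α)) ?_) (Submodule.span_le.mpr hAsub)
      rw [Ordinal.add_one_eq_succ]
      exact Order.succ_le_of_lt hα
    · exact key
  refine ⟨A, hAsub, hsup, ?_⟩
  -- fg of intersection
  have hAle : Submodule.span R (↑A : Set M) ≤ F (α+1) := Submodule.span_le.mpr hAsub
  set l : ↥(Submodule.span R (↑A : Set M)) →ₗ[R] Qα := π.comp (Submodule.inclusion hAle)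
  have hlsurj : Function.Surjective l := by
    intro q
    obtain ⟨⟨x, hx⟩, rfl⟩ := Submodule.mkQ_surjective Fα' q
    have := key x hx
    obtain ⟨a, ha, s, hs, rfl⟩ := Submodule.mem_sup.mp this
    refine ⟨⟨s, hs⟩, ?_⟩
    show π _ = π _
    rw [eq_comm, ← sub_eq_zero, ← map_sub, ← LinearMap.mem_ker, Submodule.ker_mkQ]
    show (a : M) + s - s ∈ F α
    simpa using ha
  have : Module.Finite R ↥(Submodule.span R (↑A : Set M)) :=
    Module.Finite.span_of_finite R (A.finite_toSet)
  have hker : (LinearMap.ker l).FG := Module.FinitePresentation.fg_ker (h := hfp) l hlsurj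
  have : F α ⊓ Submodule.span R ↑A =
      Submodule.map (Submodule.span R (↑A : Set M)).subtype (LinearMap.ker l) := by
    ext x
    simp only [Submodule.mem_map, Submodule.mem_inf, LinearMap.mem_ker]
    constructor
    · rintro ⟨hx1, hx2⟩
      refine ⟨⟨x, hx2⟩, ?_, rfl⟩
      show π _ = 0
      rw [← LinearMap.mem_ker, Submodule.ker_mkQ]
      exact hx1
    · rintro ⟨⟨y, hy⟩, hl, rfl⟩
      refine ⟨?_, hy⟩
      have : π (Submodule.inclusion hAle ⟨y, hy⟩) = 0 := hl
      rw [← LinearMap.mem_ker, Submodule.ker_mkQ] at this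
      exact this
  rw [this]
  exact hker.map _


/-- The submodule generated by the chosen generator sets indexed by `T`. -/
def Gmod (R : Type u) [Ring R] {M : Type u} [AddCommGroup M] [Module R M]
    (Agen : Ordinal.{u} → Finset M) (T : Finset Ordinal.{u}) : Submodule R M :=
  ⨆ β ∈ T, Submodule.span R ↑(Agen β)

lemma Gmod_mono (Agen : Ordinal.{u} → Finset M) {T₁ T₂ : Finset Ordinal.{u}} (h : T₁ ⊆ T₂) :
    Gmod R Agen T₁ ≤ Gmod R Agen T₂ := by
  refine iSup₂_le fun β hβ => ?_
  exact le_iSup₂_of_le β (h hβ) le_rfl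

lemma le_Gmod (Agen : Ordinal.{u} → Finset M) {T : Finset Ordinal.{u}} {β : Ordinal.{u}}
    (h : β ∈ T) : Submodule.span R ↑(Agen β) ≤ Gmod R Agen T :=
  le_iSup₂_of_le β h le_rfl

lemma Gmod_le (Agen : Ordinal.{u} → Finset M) {T : Finset Ordinal.{u}} {p : Submodule R M}
    (h : ∀ β ∈ T, Submodule.span R ↑(Agen β) ≤ p) : Gmod R Agen T ≤ p :=
  iSup₂_le h

/-- A finite set of indices is closed. -/
def IsClosedT (σ : Ordinal.{u}) (F : Ordinal.{u} → Submodule R M)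
    (Agen : Ordinal.{u} → Finset M) (T : Finset Ordinal.{u}) : Prop :=
  (↑T ⊆ Set.Iio σ) ∧ ∀ α ∈ T, F α ⊓ Submodule.span R ↑(Agen α) ≤
    Gmod R Agen (T.filter (· < α))

lemma closed_cover (σ : Ordinal.{u}) (F : Ordinal.{u} → Submodule R M)
    (h0 : F 0 = ⊥)
    (hmono : ∀ α β : Ordinal.{u}, α ≤ β → β ≤ σ → F α ≤ F β)
    (hlim : ∀ α : Ordinal.{u}, α ≤ σ → Order.IsSuccLimit α → F α = ⨆ β : Set.Iio α, F β)
    (Agen : Ordinal.{u} → Finset M)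
    (hA2 : ∀ α < σ, F α ⊔ Submodule.span R ↑(Agen α) = F (α+1))
    (hA3 : ∀ α < σ, (F α ⊓ Submodule.span R ↑(Agen α)).FG) :
    ∀ α : Ordinal.{u}, α ≤ σ → ∀ z ∈ F α, ∃ T : Finset Ordinal.{u},
      (↑T ⊆ Set.Iio α) ∧ IsClosedT σ F Agen T ∧ z ∈ Gmod R Agen T := by
  classical
  intro α
  induction α using Ordinal.induction with
  | h α IH =>
  intro hα z hz
  rcases Ordinal.zero_or_succ_or_isSuccLimit α with h0' | ⟨δ, hδ⟩ | hlim'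
  · subst h0'
    rw [h0, Submodule.mem_bot] at hz
    subst hz
    exact ⟨∅, by simp, ⟨by simp, by simp⟩, Submodule.zero_mem _⟩
  · have hδ1 : α = δ + 1 := by rw [← hδ, Ordinal.add_one_eq_succ]
    subst hδ1
    have hδα : δ < δ + 1 := by
      rw [Ordinal.add_one_eq_succ]; exact Order.lt_succ δ
    have hδσ : δ < σ := lt_of_lt_of_le hδα hα
    have hδσ' : δ ≤ σ := le_of_lt hδσ
    rw [← hA2 δ hδσ] at hz
    obtain ⟨y, hy, w, hw, rfl⟩ := Submodule.mem_sup.mp hz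
    obtain ⟨T₁, hT₁sub, hT₁cl, hyT₁⟩ := IH δ hδα hδσ' y hy
    obtain ⟨b, hb⟩ := hA3 δ hδσ
    have hbmem : ∀ x ∈ b, x ∈ F δ := by
      intro x hx
      have : x ∈ Submodule.span R (↑b : Set M) := Submodule.subset_span hx
      rw [hb] at this
      exact this.1
    have hTx : ∀ x ∈ b, ∃ T : Finset Ordinal.{u},
        (↑T ⊆ Set.Iio δ) ∧ IsClosedT σ F Agen T ∧ x ∈ Gmod R Agen T := by
      intro x hx
      exact IH δ hδα hδσ' x (hbmem x hx)
    choose Tf hTf1 hTf2 hTf3 using hTx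
    set Tb : Finset Ordinal.{u} := b.attach.biUnion (fun x => Tf x.1 x.2) with hTb
    have hTbsub : ↑Tb ⊆ Set.Iio δ := by
      intro β hβ
      simp only [hTb, Finset.coe_biUnion, Set.mem_iUnion, Finset.mem_coe] at hβ
      obtain ⟨x, _, hx2⟩ := hβ
      exact hTf1 x.1 x.2 hx2
    set T : Finset Ordinal.{u} := insert δ (T₁ ∪ Tb) with hT
    have hT₁T : T₁ ⊆ T := fun β hβ => Finset.mem_insert_of_mem (Finset.mem_union_left _ hβ)
    have hTbT : Tb ⊆ T := fun β hβ => Finset.mem_insert_of_mem (Finset.mem_union_right _ hβ)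
    have hTsub : ↑T ⊆ Set.Iio (δ + 1) := by
      intro β hβ
      simp only [hT, Finset.coe_insert, Set.mem_insert_iff, Finset.coe_union,
        Set.mem_union, Finset.mem_coe] at hβ
      rcases hβ with rfl | hβ | hβ
      · exact hδα
      · exact lt_trans (hT₁sub hβ) hδα
      · exact lt_trans (hTbsub hβ) hδα
    refine ⟨T, hTsub, ⟨?_, ?_⟩, ?_⟩
    · intro β hβ
      have := hTsub hβ
      exact lt_of_lt_of_le this hα
    · intro μ hμ
      rcases Finset.mem_insert.mp hμ with rfl | hμ'
      · -- μ = δ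
        rw [hb.symm]
        refine Submodule.span_le.mpr ?_
        intro x hx
        have h1 : x ∈ Gmod R Agen (Tf x hx) := hTf3 x hx
        have h2 : Tf x hx ⊆ T.filter (· < μ) := by
          intro β hβ
          refine Finset.mem_filter.mpr ⟨hTbT ?_, hTf1 x hx hβ⟩
          simp only [hTb, Finset.mem_biUnion]
          exact ⟨⟨x, hx⟩, Finset.mem_attach _ _, hβ⟩
        exact Gmod_mono Agen h2 h1
      · rcases Finset.mem_union.mp hμ' with hμ₁ | hμ₂
        · refine le_trans (hT₁cl.2 μ hμ₁) (Gmod_mono Agen ?_)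
          intro β hβ
          obtain ⟨hβT, hβlt⟩ := Finset.mem_filter.mp hβ
          exact Finset.mem_filter.mpr ⟨hT₁T hβT, hβlt⟩
        · simp only [hTb, Finset.mem_biUnion] at hμ₂
          obtain ⟨x, -, hx2⟩ := hμ₂
          refine le_trans ((hTf2 x.1 x.2).2 μ hx2) (Gmod_mono Agen ?_)
          intro β hβ
          obtain ⟨hβT, hβlt⟩ := Finset.mem_filter.mp hβ
          refine Finset.mem_filter.mpr ⟨hTbT ?_, hβlt⟩
          simp only [hTb, Finset.mem_biUnion]
          exact ⟨x, Finset.mem_attach _ _, hβT⟩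
    · refine Submodule.add_mem _ ?_ ?_
      · exact Gmod_mono Agen hT₁T hyT₁
      · exact le_Gmod Agen (Finset.mem_insert_self δ _) hw
  · -- limit case
    rw [hlim α hα hlim'] at hz
    have hne : Nonempty (Set.Iio α) := ⟨⟨0, hlim'.pos⟩⟩
    have hdir : Directed (· ≤ ·) (fun β : Set.Iio α => F β.1) := by
      intro i j
      have hij : max i.1 j.1 < α := max_lt (Set.mem_Iio.mp i.2) (Set.mem_Iio.mp j.2)
      refine ⟨⟨max i.1 j.1, Set.mem_Iio.mpr hij⟩, ?_, ?_⟩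
      · exact hmono i.1 _ (le_max_left _ _) (le_of_lt (lt_of_lt_of_le hij hα))
      · exact hmono j.1 _ (le_max_right _ _) (le_of_lt (lt_of_lt_of_le hij hα))
    obtain ⟨⟨β, hβ⟩, hzβ⟩ := (Submodule.mem_iSup_of_directed _ hdir).mp hz
    have hβα : β < α := Set.mem_Iio.mp hβ
    obtain ⟨T, hTsub, hTcl, hzT⟩ := IH β hβα (le_of_lt (lt_of_lt_of_le hβα hα)) z hzβ
    exact ⟨T, fun x hx => Set.mem_Iio.mpr (lt_trans (Set.mem_Iio.mp (hTsub hx)) hβα), hTcl, hzT⟩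


theorem stmt10' (S : Set (ModuleCat.{u} R))
    (hS : ∀ N ∈ S, Module.FinitePresentation R N)
    (σ : Ordinal.{u}) (F : Ordinal.{u} → Submodule R M)
    (h0 : F 0 = ⊥) (htop : F σ = ⊤)
    (hmono : ∀ α β : Ordinal.{u}, α ≤ β → β ≤ σ → F α ≤ F β)
    (hlim : ∀ α : Ordinal.{u}, α ≤ σ → Order.IsSuccLimit α → F α = ⨆ β : Set.Iio α, F β)
    (hquot : ∀ α : Ordinal.{u}, α < σ → ∃ N ∈ S,
      Nonempty ((↥(F (α + 1)) ⧸ Submodule.comap (F (α + 1)).subtype (F α)) ≃ₗ[R] ↥N))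
    (γ : Ordinal.{u}) (hγ : γ ≤ σ) (X : Finset M) :
    ∃ P : Submodule R M, F γ ≤ P ∧ (X : Set M) ⊆ (P : Set M) ∧
      Module.FinitePresentation R (↥P ⧸ Submodule.comap P.subtype (F γ)) ∧
      ∃ (σ' : Ordinal.{u}) (F' : Ordinal.{u} → Submodule R (↥P ⧸ Submodule.comap P.subtype (F γ))),
        F' 0 = ⊥ ∧ F' σ' = ⊤ ∧
        (∀ α β : Ordinal.{u}, α ≤ β → β ≤ σ' → F' α ≤ F' β) ∧
        (∀ α : Ordinal.{u}, α ≤ σ' → Order.IsSuccLimit α → F' α = ⨆ β : Set.Iio α, F' β) ∧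
        (∀ α : Ordinal.{u}, α < σ' → ∃ N ∈ S,
          Nonempty ((↥(F' (α + 1)) ⧸ Submodule.comap (F' (α + 1)).subtype (F' α)) ≃ₗ[R] ↥N)) := by
  classical
  -- choose generators
  have hch : ∀ α : Ordinal.{u}, ∃ A : Finset M, α < σ →
      (↑A ⊆ (F (α+1) : Set M) ∧ F α ⊔ Submodule.span R ↑A = F (α+1) ∧
        (F α ⊓ Submodule.span R ↑A).FG) := by
    intro α
    by_cases h : α < σ
    · obtain ⟨A, h1, h2, h3⟩ := exists_gen S hS σ F hmono hquot α h
      exact ⟨A, fun _ => ⟨h1, h2, h3⟩⟩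
    · exact ⟨∅, fun h' => absurd h' h⟩
  choose Agen hAgen using hch
  have hA1 : ∀ α < σ, Submodule.span R ↑(Agen α) ≤ F (α+1) :=
    fun α h => Submodule.span_le.mpr (hAgen α h).1
  have hA2 : ∀ α < σ, F α ⊔ Submodule.span R ↑(Agen α) = F (α+1) := fun α h => (hAgen α h).2.1
  have hA3 : ∀ α < σ, (F α ⊓ Submodule.span R ↑(Agen α)).FG := fun α h => (hAgen α h).2.2
  have hsucc_le : ∀ {α : Ordinal.{u}}, α < σ → α + 1 ≤ σ := by
    intro α h
    rw [Ordinal.add_one_eq_succ]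
    exact Order.succ_le_of_lt h
  -- closed covers for the elements of X
  have hX : ∀ x ∈ X, ∃ T : Finset Ordinal.{u}, ↑T ⊆ Set.Iio σ ∧ IsClosedT σ F Agen T ∧
      x ∈ Gmod R Agen T := by
    intro x _
    exact closed_cover σ F h0 hmono hlim Agen hA2 hA3 σ le_rfl x (htop ▸ Submodule.mem_top)
  choose Tf hTf1 hTf2 hTf3 using hX
  set T : Finset Ordinal.{u} := X.attach.biUnion (fun x => Tf x.1 x.2) with hTdef
  have hTfT : ∀ (x : M) (hx : x ∈ X), Tf x hx ⊆ T := by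
    intro x hx β hβ
    simp only [hTdef, Finset.mem_biUnion]
    exact ⟨⟨x, hx⟩, Finset.mem_attach _ _, hβ⟩
  have hTσ : ↑T ⊆ Set.Iio σ := by
    intro β hβ
    simp only [hTdef, Finset.coe_biUnion, Set.mem_iUnion, Finset.mem_coe] at hβ
    obtain ⟨x, -, hx2⟩ := hβ
    exact (hTf2 x.1 x.2).1 hx2
  have hTcl : ∀ α ∈ T, F α ⊓ Submodule.span R ↑(Agen α) ≤
      Gmod R Agen (T.filter (· < α)) := by
    intro α hα
    simp only [hTdef, Finset.mem_biUnion] at hα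
    obtain ⟨x, -, hx2⟩ := hα
    refine le_trans ((hTf2 x.1 x.2).2 α hx2) (Gmod_mono Agen ?_)
    intro β hβ
    obtain ⟨hβT, hβlt⟩ := Finset.mem_filter.mp hβ
    exact Finset.mem_filter.mpr ⟨hTfT x.1 x.2 hβT, hβlt⟩
  -- the part of T above γ, sorted
  set T2 : Finset Ordinal.{u} := T.filter (γ ≤ ·) with hT2def
  set L : List Ordinal.{u} := T2.sort (· ≤ ·) with hLdef
  set n : ℕ := L.length with hndef
  have hsort : List.Pairwise (· < ·) L := T2.sortedLT_sort.pairwise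
  have hLT2 : ∀ β, β ∈ L ↔ β ∈ T ∧ γ ≤ β := by
    intro β
    rw [hLdef, Finset.mem_sort, hT2def, Finset.mem_filter]
  -- the chain
  set c : ℕ → Submodule R M := fun i => F γ ⊔ Gmod R Agen (L.take i).toFinset with hcdef
  have hc0 : c 0 = F γ := by
    simp [hcdef, Gmod]
  have hcmono : Monotone c := by
    intro i j hij
    refine sup_le_sup_left (Gmod_mono Agen ?_) _
    intro β hβ
    rw [List.mem_toFinset] at hβ ⊢
    exact (List.take_isPrefix_take.mpr (Or.inl hij)).subset hβ
  have hget : ∀ i (h : i < n), (L.get ⟨i, h⟩ ∈ T ∧ γ ≤ L.get ⟨i, h⟩) := by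
    intro i h
    exact (hLT2 _).mp (List.get_mem L ⟨i, h⟩)
  have hgetσ : ∀ i (h : i < n), L.get ⟨i, h⟩ < σ := fun i h => hTσ (hget i h).1
  have hmem_take : ∀ (i j : ℕ) (hj : j < n), j < i → L.get ⟨j, hj⟩ ∈ (L.take i).toFinset := by
    intro i j hj hij
    rw [List.mem_toFinset]
    refine List.mem_take_iff_getElem.mpr ⟨j, ?_, rfl⟩
    rw [hndef] at hj
    omega
  have htake_mem : ∀ (i : ℕ) (β : Ordinal.{u}), β ∈ (L.take i).toFinset →
      ∃ (j : ℕ) (hj : j < n), j < i ∧ β = L.get ⟨j, hj⟩ := by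
    intro i β hβ
    rw [List.mem_toFinset] at hβ
    obtain ⟨j, hj, hβ'⟩ := List.mem_take_iff_getElem.mp hβ
    have hj2 : j < n := lt_of_lt_of_le hj (by rw [hndef]; omega)
    exact ⟨j, hj2, lt_of_lt_of_le hj (by omega), hβ'.symm⟩
  have hget_lt : ∀ (i j : ℕ) (hi : i < n) (hj : j < n), j < i →
      L.get ⟨j, hj⟩ < L.get ⟨i, hi⟩ := by
    intro i j hi hj hij
    exact hsort.rel_get_of_lt hij
  have hcsub : ∀ i (h : i < n), c i ≤ F (L.get ⟨i, h⟩) := by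
    intro i h
    have hσi : L.get ⟨i, h⟩ ≤ σ := le_of_lt (hgetσ i h)
    refine sup_le (hmono γ _ (hget i h).2 hσi) (Gmod_le Agen ?_)
    intro β hβ
    obtain ⟨j, hj, hji, rfl⟩ := htake_mem i β hβ
    refine le_trans (hA1 _ (hgetσ j hj)) (hmono _ _ ?_ hσi)
    rw [Ordinal.add_one_eq_succ]
    exact Order.succ_le_of_lt (hget_lt i j h hj hji)
  have hnext : ∀ i (h : i < n), c (i+1) = c i ⊔ Submodule.span R ↑(Agen (L.get ⟨i, h⟩)) := by
    intro i h
    have htake : (L.take (i+1)).toFinset = insert (L.get ⟨i, h⟩) (L.take i).toFinset := by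
      apply Finset.ext
      intro β
      simp only [Finset.mem_insert, List.mem_toFinset]
      constructor
      · intro hβ
        obtain ⟨j, hj, hβ'⟩ := List.mem_take_iff_getElem.mp hβ
        have hj' : j < n := lt_of_lt_of_le hj (by rw [hndef]; omega)
        rcases Nat.lt_or_ge j i with hji | hji
        · right
          exact hβ' ▸ List.mem_toFinset.mp (hmem_take i j hj' hji)
        · left
          have : j = i := by omega
          subst this
          rw [← hβ']
          rfl
      · rintro (rfl | hβ)
        · exact List.mem_toFinset.mp (hmem_take (i+1) i h (Nat.lt_succ_self i))
        · exact (List.take_isPrefix_take.mpr (Or.inl (Nat.le_succ i))).subset hβ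
    have hgins : Gmod R Agen (insert (L.get ⟨i, h⟩) (L.take i).toFinset) =
        Submodule.span R ↑(Agen (L.get ⟨i, h⟩)) ⊔ Gmod R Agen (L.take i).toFinset := by
      rw [Gmod, Gmod, Finset.iSup_insert]
    show F γ ⊔ Gmod R Agen (L.take (i+1)).toFinset =
      (F γ ⊔ Gmod R Agen (L.take i).toFinset) ⊔ Submodule.span R ↑(Agen (L.get ⟨i, h⟩))
    rw [htake, hgins]
    ac_rfl
  have hGfilt : ∀ i (h : i < n), Gmod R Agen (T.filter (· < L.get ⟨i, h⟩)) ≤ c i := by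
    intro i h
    refine Gmod_le Agen ?_
    intro β hβ
    obtain ⟨hβT, hβlt⟩ := Finset.mem_filter.mp hβ
    rcases lt_or_ge β γ with hβγ | hβγ
    · refine le_trans (hA1 β (hTσ hβT)) (le_trans (hmono _ γ ?_ hγ) (hc0 ▸ hcmono (Nat.zero_le i)))
      rw [Ordinal.add_one_eq_succ]
      exact Order.succ_le_of_lt hβγ
    · have hβL : β ∈ L := (hLT2 β).mpr ⟨hβT, hβγ⟩
      obtain ⟨⟨j, hj⟩, rfl⟩ := List.mem_iff_get.mp hβL
      have hji : j < i := by
        by_contra hc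
        push_neg at hc
        rcases Nat.lt_or_ge i j with hij | hij
        · exact absurd (hget_lt j i hj h hij) (not_lt.mpr (le_of_lt hβlt))
        · have : j = i := le_antisymm hij hc
          subst this
          exact absurd hβlt (lt_irrefl _)
      refine le_trans (le_Gmod Agen (hmem_take i j hj hji)) le_sup_right
  have hinf : ∀ i (h : i < n), c (i+1) ⊓ F (L.get ⟨i, h⟩) ≤ c i := by
    intro i h
    intro x hx
    obtain ⟨hx1, hx2⟩ := Submodule.mem_inf.mp hx
    rw [hnext i h] at hx1
    obtain ⟨y, hy, w, hw, rfl⟩ := Submodule.mem_sup.mp hx1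
    have hwF : w ∈ F (L.get ⟨i, h⟩) ⊓ Submodule.span R ↑(Agen (L.get ⟨i, h⟩)) := by
      refine Submodule.mem_inf.mpr ⟨?_, hw⟩
      have hyF : y ∈ F (L.get ⟨i, h⟩) := hcsub i h hy
      have : w = (y + w) - y := by abel
      rw [this]
      exact Submodule.sub_mem _ hx2 hyF
    have hwc : w ∈ c i := hGfilt i h (hTcl _ (hget i h).1 hwF)
    exact Submodule.add_mem _ hy hwc
  have hsup : ∀ i (h : i < n), c (i+1) ⊔ F (L.get ⟨i, h⟩) = F (L.get ⟨i, h⟩ + 1) := by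
    intro i h
    rw [hnext i h]
    have h1 : (c i ⊔ Submodule.span R ↑(Agen (L.get ⟨i, h⟩))) ⊔ F (L.get ⟨i, h⟩) =
        (c i ⊔ F (L.get ⟨i, h⟩)) ⊔ Submodule.span R ↑(Agen (L.get ⟨i, h⟩)) := by ac_rfl
    rw [h1, sup_eq_right.mpr (hcsub i h), hA2 _ (hgetσ i h)]
  have hquotc : ∀ i (h : i < n), ∃ N ∈ S,
      Nonempty ((↥(c (i+1)) ⧸ Submodule.comap (c (i+1)).subtype (c i)) ≃ₗ[R] ↥N) := by
    intro i h
    obtain ⟨N, hN, ⟨e⟩⟩ := hquot (L.get ⟨i, h⟩) (hgetσ i h)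
    obtain ⟨e2⟩ := quot_equiv_of_sup (hsup i h) (hcmono (Nat.le_succ i)) (hinf i h)
      (hcsub i h)
    exact ⟨N, hN, ⟨e2.trans e⟩⟩
  set P : Submodule R M := c n with hPdef
  have hFγP : F γ ≤ P := hc0 ▸ hcmono (Nat.zero_le n)
  have hciP : ∀ i ≤ n, c i ≤ P := fun i h => hcmono h
  have hGTP : Gmod R Agen T ≤ P := by
    refine Gmod_le Agen ?_
    intro β hβT
    rcases lt_or_ge β γ with hβγ | hβγ
    · refine le_trans (hA1 β (hTσ hβT)) (le_trans (hmono _ γ ?_ hγ) hFγP)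
      rw [Ordinal.add_one_eq_succ]
      exact Order.succ_le_of_lt hβγ
    · have hβL : β ∈ L := (hLT2 β).mpr ⟨hβT, hβγ⟩
      obtain ⟨⟨j, hj⟩, rfl⟩ := List.mem_iff_get.mp hβL
      exact le_trans (le_Gmod Agen (hmem_take n j hj hj)) le_sup_right
  have hXP : (X : Set M) ⊆ (P : Set M) := by
    intro x hx
    exact hGTP (Gmod_mono Agen (hTfT x hx) (hTf3 x hx))
  -- finite presentation of the quotients along the chain
  have hfp : ∀ i, i ≤ n → Module.FinitePresentation R
      (↥(c i) ⧸ Submodule.comap (c i).subtype (F γ)) := by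
    intro i
    induction i with
    | zero =>
      intro _
      have hqt : Submodule.comap (c 0).subtype (F γ) = ⊤ := by
        rw [hc0]
        exact Submodule.comap_subtype_self _
      haveI : Subsingleton (↥(c 0) ⧸ Submodule.comap (c 0).subtype (F γ)) := by
        rw [hqt]
        exact Submodule.Quotient.subsingleton_iff.mpr rfl
      exact fp_of_subsingleton _
    | succ i IH =>
      intro hin
      have hi : i < n := hin
      have hIH := IH (le_of_lt hi)
      have hAB : Submodule.comap (c (i+1)).subtype (F γ) ≤
          Submodule.comap (c (i+1)).subtype (c i) :=
        Submodule.comap_mono (hc0 ▸ hcmono (Nat.zero_le i))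
      obtain ⟨l, hlsurj, ⟨eker⟩⟩ := quot_quot_ker_equiv
        (Submodule.comap (c (i+1)).subtype (F γ)) (Submodule.comap (c (i+1)).subtype (c i)) hAB
      obtain ⟨N, hN, ⟨e⟩⟩ := hquotc i hi
      -- identify W ⧸ B with the abstract quotient c (i+1) / c i
      have hWB : (↥(c (i+1)) ⧸ Submodule.comap (c (i+1)).subtype (c i)) =
          (↥(c (i+1)) ⧸ Submodule.comap (c (i+1)).subtype (c i)) := rfl
      haveI hfpWB : Module.FinitePresentation R
          (↥(c (i+1)) ⧸ Submodule.comap (c (i+1)).subtype (c i)) :=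
        fp_equiv e.symm (hS N hN)
      -- identify ker l with c i / F γ
      have hmapB : Submodule.map (c (i+1)).subtype
          (Submodule.comap (c (i+1)).subtype (c i)) = c i := by
        rw [Submodule.map_comap_subtype]
        exact inf_eq_right.mpr (hcmono (Nat.le_succ i))
      have hmapA : Submodule.map (c (i+1)).subtype
          (Submodule.comap (c (i+1)).subtype (F γ)) = F γ := by
        rw [Submodule.map_comap_subtype]
        exact inf_eq_right.mpr (le_trans (hc0 ▸ hcmono (Nat.zero_le i)) (hcmono (Nat.le_succ i)))
      obtain ⟨e3⟩ := quot_map_equiv ((c (i+1)).subtype) hAB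
        (by rw [Submodule.ker_subtype]; exact bot_le)
      rw [hmapB, hmapA] at e3
      haveI hfpker : Module.FinitePresentation R ↥(LinearMap.ker l) :=
        fp_equiv eker.symm (fp_equiv e3 hIH)
      exact Module.finitePresentation_of_ker l hlsurj
  refine ⟨P, hFγP, hXP, hfp n le_rfl, ?_⟩
  -- build the S-filtration of P / F γ of length n
  set Fq : Submodule R ↥P := Submodule.comap P.subtype (F γ) with hFqdef
  set mk' : ↥P →ₗ[R] (↥P ⧸ Fq) := Fq.mkQ with hmk'def
  set Dbar : ℕ → Submodule R (↥P ⧸ Fq) :=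
    fun i => Submodule.map mk' (Submodule.comap P.subtype (c i)) with hDdef
  have hDmono : Monotone Dbar :=
    fun i j hij => Submodule.map_mono (Submodule.comap_mono (hcmono hij))
  set F' : Ordinal.{u} → Submodule R (↥P ⧸ Fq) :=
    fun β => ⨆ (i : ℕ) (_ : (i : Ordinal.{u}) ≤ β ∧ i ≤ n), Dbar i with hF'def
  have hF'mono : ∀ α β : Ordinal.{u}, α ≤ β → F' α ≤ F' β := by
    intro α β hαβ
    refine iSup_le fun i => iSup_le fun hi => ?_
    exact le_iSup₂_of_le i ⟨le_trans hi.1 hαβ, hi.2⟩ le_rfl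
  have hF'nat : ∀ j : ℕ, j ≤ n → F' (j : Ordinal.{u}) = Dbar j := by
    intro j hj
    apply le_antisymm
    · refine iSup_le fun k => iSup_le fun hk => hDmono (Nat.cast_le.mp hk.1)
    · exact le_iSup₂_of_le j ⟨le_rfl, hj⟩ le_rfl
  have hD0 : Dbar 0 = ⊥ := by
    rw [hDdef]
    simp only
    rw [hc0, ← hFqdef, hmk'def, Submodule.mkQ_map_self]
  have hDn : Dbar n = ⊤ := by
    rw [hDdef]
    simp only
    rw [show Submodule.comap P.subtype (c n) = ⊤ from Submodule.comap_subtype_self _,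
      Submodule.map_top, hmk'def, Submodule.range_mkQ]
  refine ⟨(n : Ordinal.{u}), F', ?_, ?_, fun α β h _ => hF'mono α β h, ?_, ?_⟩
  · -- F' 0 = ⊥
    rw [show (0 : Ordinal.{u}) = ((0 : ℕ) : Ordinal.{u}) by simp, hF'nat 0 (Nat.zero_le n), hD0]
  · -- F' n = ⊤
    rw [hF'nat n le_rfl, hDn]
  · -- limit case is vacuous
    intro α hα hlim'
    exact absurd (lt_of_le_of_lt hα (Ordinal.nat_lt_omega0 n))
      (not_lt.mpr (Ordinal.omega0_le_of_isSuccLimit hlim'))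
  · -- successive quotients
    intro α hα
    obtain ⟨i, rfl⟩ := Ordinal.lt_omega0.mp (lt_trans hα (Ordinal.nat_lt_omega0 n))
    have hi : i < n := Nat.cast_lt.mp hα
    have hcast : ((i : Ordinal.{u}) + 1) = ((i + 1 : ℕ) : Ordinal.{u}) := by
      rw [Nat.cast_succ]
    rw [hcast, hF'nat (i+1) hi, hF'nat i (le_of_lt hi)]
    obtain ⟨N, hN, ⟨e⟩⟩ := hquotc i hi
    have hAB : Submodule.comap P.subtype (c i) ≤ Submodule.comap P.subtype (c (i+1)) :=
      Submodule.comap_mono (hcmono (Nat.le_succ i))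
    have hkerle : LinearMap.ker mk' ≤ Submodule.comap P.subtype (c i) := by
      rw [hmk'def, Submodule.ker_mkQ, hFqdef]
      exact Submodule.comap_mono (hc0 ▸ hcmono (Nat.zero_le i))
    obtain ⟨e2⟩ := quot_map_equiv mk' hAB hkerle
    have hmapB : Submodule.map P.subtype (Submodule.comap P.subtype (c (i+1))) = c (i+1) := by
      rw [Submodule.map_comap_subtype]
      exact inf_eq_right.mpr (hciP (i+1) hi)
    have hmapA : Submodule.map P.subtype (Submodule.comap P.subtype (c i)) = c i := by
      rw [Submodule.map_comap_subtype]
      exact inf_eq_right.mpr (hciP i (le_of_lt hi))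
    obtain ⟨e3⟩ := quot_map_equiv (P.subtype) hAB
      (by rw [Submodule.ker_subtype]; exact bot_le)
    rw [hmapB, hmapA] at e3
    exact ⟨N, hN, ⟨e2.trans (e3.symm.trans e)⟩⟩



/-- For a module `M` with an `S`-filtration by finitely presented modules,
any member `N = F γ` of the filtration and any finite subset `X ⊆ M` are contained in a
submodule `P` such that `P/N` is finitely presented and `S`-filtered. -/
theorem stmt10 (S : Set (ModuleCat.{u} R))
    (hS : ∀ N ∈ S, Module.FinitePresentation R N)
    {M : Type u} [AddCommGroup M] [Module R M]
    (σ : Ordinal.{u}) (F : Ordinal.{u} → Submodule R M) (hF : IsSFiltration S σ F)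
    (γ : Ordinal.{u}) (hγ : γ ≤ σ) (X : Finset M) :
    ∃ P : Submodule R M, F γ ≤ P ∧ (X : Set M) ⊆ (P : Set M) ∧
      Module.FinitePresentation R (↥P ⧸ Submodule.comap P.subtype (F γ)) ∧
      IsSFiltered S (↥P ⧸ Submodule.comap P.subtype (F γ)) := by
  obtain ⟨h0, htop, hmono, hlim, hquot⟩ := hF
  obtain ⟨P, h1, h2, h3, σ', F', f1, f2, f3, f4, f5⟩ :=
    stmt10' S hS σ F h0 htop hmono hlim hquot γ hγ X
  exact ⟨P, h1, h2, h3, σ', F', f1, f2, f3, f4, f5⟩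
end
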